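/- In a finite directed graph with edge set T and vertex set Q, define the boundary map ∂ : ℕ^T → ℤ^Q by ∂(e_t) = e_{target(t)} − e_{source(t)}. A vector u ∈ ℕ^T satisfies ∂(u) = 0 if and only if u is a finite sum of (Parikh images of) cycles of the graph. -/

import Mathlib

/-- A cycle in a directed graph with edge source/target maps: a non-empty list
of edges where consecutive edges are composable and the last edge returns to
the source of the first. -/
def IsCycle {T Q : Type*} (src tgt : T → Q) (c : List T) : Prop :=
  c ≠ [] ∧ c.Chain' (fun a b => tgt a = src b) ∧
    ∀ h : c ≠ [], tgt (c.getLast h) = src (c.head h)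

private lemma sumA {T : Type*} [Fintype T] [DecidableEq T] (g : T → ℤ) :
    ∀ c : List T, ∑ t : T, (c.count t : ℤ) * g t = (c.map g).sum := by
  intro c
  induction c with
  | nil => simp
  | cons a c ih =>
    simp only [List.count_cons, List.map_cons, List.sum_cons, Nat.cast_add]
    rw [← ih]
    simp [add_mul, Finset.sum_add_distrib, ite_mul, beq_iff_eq, Finset.sum_ite_eq, add_comm]

private lemma sumB {T Q : Type*} (src tgt : T → Q) [DecidableEq Q] (q : Q) :
    ∀ (c : List T) (a : T), List.Chain' (fun x y => tgt x = src y) (a :: c) →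
      ((a :: c).map (fun x => (if tgt x = q then (1:ℤ) else 0) - (if src x = q then 1 else 0))).sum
        = (if tgt ((a::c).getLast (by simp)) = q then 1 else 0) - (if src a = q then 1 else 0) := by
  intro c
  induction c with
  | nil => intro a _; simp; congr
  | cons b c ih =>
    intro a h
    simp only [List.Chain', List.isChain_cons_cons] at h
    have hab : tgt a = src b := h.1
    have := ih b h.2
    simp only [List.map_cons, List.sum_cons] at this ⊢
    rw [this]
    rw [show (a :: b :: c).getLast (by simp) = (b :: c).getLast (by simp) from
      List.getLast_cons (by simp)]
    rw [hab]
    ring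

private lemma cycle_boundary {T Q : Type*} [Fintype T] [DecidableEq T] [DecidableEq Q]
    (src tgt : T → Q) (c : List T) (hc : IsCycle src tgt c) (q : Q) :
    ∑ t : T, (c.count t : ℤ) *
      ((if tgt t = q then 1 else 0) - (if src t = q then 1 else 0)) = 0 := by
  obtain ⟨hne, hch, hcl⟩ := hc
  rw [sumA]
  obtain ⟨a, c, rfl⟩ := List.exists_cons_of_ne_nil hne
  rw [sumB src tgt q c a hch]
  have := hcl (by simp)
  simp only [List.head_cons] at this
  rw [this]
  ring

private lemma flow_step {Q T : Type*} [Fintype Q] [Fintype T] [DecidableEq Q] [DecidableEq T]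
    (src tgt : T → Q) (u : T → ℕ)
    (hflow : ∀ q : Q, ∑ t : T, (u t : ℤ) *
        ((if tgt t = q then 1 else 0) - (if src t = q then 1 else 0)) = 0)
    (t0 : T) (h0 : u t0 ≠ 0) : ∃ t', src t' = tgt t0 ∧ u t' ≠ 0 := by
  by_contra hcon
  push_neg at hcon
  have h := hflow (tgt t0)
  simp only [mul_sub] at h
  rw [Finset.sum_sub_distrib] at h
  have h2 : ∑ t : T, (u t : ℤ) * (if src t = tgt t0 then 1 else 0) = 0 := by
    apply Finset.sum_eq_zero
    intro t _
    by_cases hs : src t = tgt t0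
    · simp [hcon t hs]
    · simp [hs]
  rw [h2, sub_zero] at h
  have h3 := (Finset.sum_eq_zero_iff_of_nonneg (by
    intro t _
    positivity)).mp h t0 (Finset.mem_univ t0)
  simp at h3
  exact h0 h3

private lemma exists_cycle {Q T : Type*} [Fintype T] [DecidableEq T]
    (src tgt : T → Q) (u : T → ℕ)
    (hstep : ∀ t : T, u t ≠ 0 → ∃ t', src t' = tgt t ∧ u t' ≠ 0)
    (t0 : T) (h0 : u t0 ≠ 0) :
    ∃ c : List T, IsCycle src tgt c ∧ c.Nodup ∧ ∀ t ∈ c, u t ≠ 0 := by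
  have hg : ∀ p : {t : T // u t ≠ 0}, ∃ p' : {t : T // u t ≠ 0}, src p'.1 = tgt p.1 := by
    intro p
    obtain ⟨t', h1, h2⟩ := hstep p.1 p.2
    exact ⟨⟨t', h2⟩, h1⟩
  choose g hgs using hg
  set f : ℕ → {t : T // u t ≠ 0} := fun n => g^[n] ⟨t0, h0⟩ with hfdef
  have hf : ∀ n, src (f (n+1)).1 = tgt (f n).1 := by
    intro n
    have : f (n+1) = g (f n) := Function.iterate_succ_apply' g n _
    rw [this]
    exact hgs (f n)
  have hP : ∃ n, ∃ i < n, f i = f n := by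
    obtain ⟨x, y, hxy, hfxy⟩ := Finite.exists_ne_map_eq_of_infinite f
    rcases lt_or_gt_of_ne hxy with h | h
    · exact ⟨y, x, h, hfxy⟩
    · exact ⟨x, y, h, hfxy.symm⟩
  set j := Nat.find hP with hj
  obtain ⟨i, hij, hfij⟩ := Nat.find_spec hP
  have hinj : ∀ a b, a < b → b < j → f a ≠ f b := by
    intro a b hab hbj hfab
    exact Nat.find_min hP hbj ⟨a, hab, hfab⟩
  obtain ⟨m, hm⟩ : ∃ m, j - i = m + 1 := ⟨j - i - 1, by omega⟩
  have him : i + m + 1 = j := by omega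
  set F : ℕ → T := fun k => (f (i + k)).1 with hF
  set L : List T := (List.range (m+1)).map F with hL
  have hLne : L ≠ [] := by simp [hL]
  have hhead : L.head hLne = F 0 := by
    have h1 : L.head? = some (F 0) := by
      rw [hL, List.range_succ_eq_map]; simp
    have h2 := List.head?_eq_head hLne
    rw [h1] at h2
    exact (Option.some.inj h2).symm
  have hlast : L.getLast hLne = F m := by
    have h1 : L.getLast? = some (F m) := by
      rw [hL, List.range_succ, List.map_append]
      simp [List.getLast?_concat]
    have h2 := List.getLast?_eq_getLast (l := L) hLne
    rw [h1] at h2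
    exact (Option.some.inj h2).symm
  have hchain : L.Chain' (fun a b => tgt a = src b) := by
    rw [hL]; simp only [List.Chain']; rw [List.isChain_map, List.isChain_range_succ]
    intro k _
    show tgt (f (i+k)).1 = src (f (i+(k+1))).1
    rw [show i + (k+1) = (i+k)+1 by omega, hf (i+k)]
  have hfsub : ∀ a b, (f a).1 = (f b).1 → f a = f b := fun a b h => Subtype.ext h
  refine ⟨L, ⟨hLne, hchain, ?_⟩, ?_, ?_⟩
  · intro _
    rw [hlast, hhead]
    show tgt (f (i+m)).1 = src (f (i+0)).1
    have h1 : src (f (i+m+1)).1 = tgt (f (i+m)).1 := hf (i+m)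
    rw [him] at h1
    rw [← hfij] at h1
    rw [← h1]
    norm_num
  · rw [hL]
    refine List.Nodup.map_on ?_ List.nodup_range
    intro x hx y hy hFxy
    simp only [List.mem_range] at hx hy
    by_contra hne
    rcases lt_or_gt_of_ne hne with h | h
    · exact hinj (i+x) (i+y) (by omega) (by omega) (hfsub _ _ hFxy)
    · exact hinj (i+y) (i+x) (by omega) (by omega) (hfsub _ _ hFxy.symm)
  · intro t ht
    rw [hL] at ht
    obtain ⟨k, _, rfl⟩ := List.mem_map.mp ht
    exact (f (i+k)).2

theorem flow_iff_sum_of_cycles {Q T : Type*} [Fintype Q] [Fintype T]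
    [DecidableEq Q] [DecidableEq T] (src tgt : T → Q) (u : T → ℕ) :
    (∀ q : Q, ∑ t : T, (u t : ℤ) *
        ((if tgt t = q then 1 else 0) - (if src t = q then 1 else 0)) = 0) ↔
    ∃ cs : List (List T), (∀ c ∈ cs, IsCycle src tgt c) ∧
      ∀ t : T, u t = (cs.map (fun c => c.count t)).sum := by
  constructor
  · -- forward: flow decomposes into cycles
    have main : ∀ n (u : T → ℕ), (∑ t : T, u t) ≤ n →
        (∀ q : Q, ∑ t : T, (u t : ℤ) *
          ((if tgt t = q then 1 else 0) - (if src t = q then 1 else 0)) = 0) →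
        ∃ cs : List (List T), (∀ c ∈ cs, IsCycle src tgt c) ∧
          ∀ t : T, u t = (cs.map (fun c => c.count t)).sum := by
      intro n
      induction n with
      | zero =>
        intro u hsum _
        refine ⟨[], by simp, fun t => ?_⟩
        have : u t = 0 := by
          have := Finset.sum_eq_zero_iff.mp (Nat.le_zero.mp hsum) t (Finset.mem_univ t)
          exact this
        simp [this]
      | succ n ih =>
        intro u hsum hflow
        by_cases hz : ∀ t, u t = 0
        · exact ⟨[], by simp, fun t => by simp [hz t]⟩
        · push_neg at hz
          obtain ⟨t0, h0⟩ := hz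
          obtain ⟨c, hcyc, hnd, hsupp⟩ :=
            exists_cycle src tgt u (flow_step src tgt u hflow) t0 h0
          have hcle : ∀ t, c.count t ≤ u t := by
            intro t
            by_cases ht : t ∈ c
            · calc c.count t ≤ 1 := List.nodup_iff_count_le_one.mp hnd t
              _ ≤ u t := Nat.one_le_iff_ne_zero.mpr (hsupp t ht)
            · simp [List.count_eq_zero_of_not_mem ht]
          set u' : T → ℕ := fun t => u t - c.count t with hu'
          have hcast : ∀ t, (u' t : ℤ) = (u t : ℤ) - (c.count t : ℤ) := by
            intro t
            simp [hu', Nat.cast_sub (hcle t)]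
          have hflow' : ∀ q : Q, ∑ t : T, (u' t : ℤ) *
              ((if tgt t = q then 1 else 0) - (if src t = q then 1 else 0)) = 0 := by
            intro q
            simp only [hcast, sub_mul]
            rw [Finset.sum_sub_distrib, hflow q, cycle_boundary src tgt c hcyc q]
            simp
          have hsum' : ∑ t : T, u' t ≤ n := by
            have hlt : ∑ t : T, u' t < ∑ t : T, u t := by
              obtain ⟨a, ca, rfl⟩ := List.exists_cons_of_ne_nil hcyc.1
              refine Finset.sum_lt_sum (fun t _ => Nat.sub_le _ _)
                ⟨a, Finset.mem_univ a, ?_⟩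
              have h1 : (a :: ca).count a ≠ 0 := by
                simp [List.count_cons]
              have h2 := hcle a
              show u a - (a :: ca).count a < u a
              omega
            omega
          obtain ⟨cs, hcs1, hcs2⟩ := ih u' hsum' hflow'
          refine ⟨c :: cs, ?_, fun t => ?_⟩
          · intro c' hc'
            rcases List.mem_cons.mp hc' with h | h
            · exact h ▸ hcyc
            · exact hcs1 c' h
          · have h1 := hcs2 t
            have h2 := hcle t
            have h3 : u' t = u t - c.count t := rfl
            simp only [List.map_cons, List.sum_cons]
            omega
    intro hflow
    exact main (∑ t : T, u t) u le_rfl hflow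
  · -- backward: sums of cycles are flows
    rintro ⟨cs, hcs, hu⟩ q
    have key : ∀ cs' : List (List T), (∀ c ∈ cs', IsCycle src tgt c) →
        ∑ t : T, ((cs'.map (fun c => c.count t)).sum : ℤ) *
          ((if tgt t = q then 1 else 0) - (if src t = q then 1 else 0)) = 0 := by
      intro cs'
      induction cs' with
      | nil => simp
      | cons c cs' ih =>
        intro h
        simp only [List.map_cons, List.sum_cons, Nat.cast_add, add_mul]
        rw [Finset.sum_add_distrib, cycle_boundary src tgt c (h c (by simp)) q,
          ih (fun c' hc' => h c' (by simp [hc']))]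
        simp
    simp only [hu]
    push_cast
    simp only [List.map_map, Function.comp_def]
    exact key cs hcs
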